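/- Let Q be a weakly superadditive nonnegative route-cost function on a route R = (v₁,...,v_ℓ). Define greedily, for b = 1,...,ℓ: Δ_b = max_{1 ≤ a ≤ b} ( Q((v_a,...,v_b)) - ∑_{i=a}^{b-1} Q̂(R,v_i) ) and Q̂(R,v_b) = max(Δ_b, 0), finally adding Q(R) - ∑_i Q̂(R,v_i) to Q̂(R,v₁) if positive. Then the resulting values satisfy: Q̂(R,v_i) ≥ 0 for all i, ∑_{i=1}^{ℓ} Q̂(R,v_i) = Q(R), and ∑_{i=a}^{b} Q̂(R,v_i) ≥ Q((v_a,...,v_b)) for every 1 ≤ a ≤ b ≤ ℓ. -/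

import Mathlib

namespace Stmt7Aux

theorem listsum {α} (l : List α) (f : α → ℚ) : (l.map f).sum = ∑ i : Fin l.length, f l[i] := by
  rw [Fin.sum_univ_def]
  induction l with
  | nil => simp
  | cons a t ih =>
    show f a + _ = (List.map _ (List.finRange (t.length + 1))).sum
    rw [List.finRange_succ]
    simp only [List.map_cons, List.map_map, List.sum_cons, ih]
    congr 1

def Good : ℕ → List (ℕ × ℕ) → Prop
  | _, [] => True
  | n, p :: P => p.1 ≤ p.2 ∧ p.2 < n ∧ Good p.1 P

theorem Good.mono : ∀ {n m : ℕ} {P}, Good n P → n ≤ m → Good m P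
  | _, _, [], _, _ => trivial
  | _, _, _ :: _, ⟨h1, h2, hP⟩, h => ⟨h1, lt_of_lt_of_le h2 h, hP⟩

theorem Good.mem : ∀ {n P}, Good n P → ∀ p ∈ P, p.1 ≤ p.2 ∧ p.2 < n
  | n, q :: P, ⟨h1, h2, hP⟩, p, hp => by
    rcases List.mem_cons.mp hp with rfl | hp
    · exact ⟨h1, h2⟩
    · have := Good.mem hP p hp
      exact ⟨this.1, by omega⟩

theorem Good.pairwise : ∀ {n P}, Good n P → P.Pairwise (fun p q : ℕ × ℕ => q.2 < p.1)
  | _, [], _ => List.Pairwise.nil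
  | _, _ :: _, ⟨_, _, hP⟩ =>
    List.Pairwise.cons (fun q hq => (Good.mem hP q hq).2) (Good.pairwise hP)

theorem mem_sub {V : Type*} (R : List V) (a k : ℕ) (x : V) (h : x ∈ (R.drop a).take k) :
    ∃ i, a ≤ i ∧ i < a + k ∧ ∃ h : i < R.length, R[i] = x := by
  rw [List.mem_iff_getElem] at h
  obtain ⟨j, hj, hx⟩ := h
  simp at hj
  refine ⟨a + j, by omega, by omega, by omega, ?_⟩
  simpa using hx

theorem disj_sub {V : Type*} (R : List V) (hnd : R.Nodup) (a b a' b' : ℕ)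
    (h : b' < a) (h2 : a' ≤ b') :
    ((R.drop a).take (b + 1 - a)).Disjoint ((R.drop a').take (b' + 1 - a')) := by
  intro x hx hx'
  obtain ⟨i, hai, _, hi, hxi⟩ := mem_sub R a _ x hx
  obtain ⟨j, _, hj2, hj, hxj⟩ := mem_sub R a' _ x hx'
  have hij : i = j := (List.Nodup.getElem_inj_iff hnd).mp (hxi.trans hxj.symm)
  omega

theorem key {V : Type*} (Q : List V → ℚ) (R : List V) (g : ℕ → ℚ)
    (hg : ∀ b, g b = max ((Finset.range (b + 1)).sup' Finset.nonempty_range_add_one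
        (fun a => Q ((R.drop a).take (b + 1 - a)) - ∑ i ∈ Finset.Ico a b, g i)) 0) :
    ∀ n, ∃ P : List (ℕ × ℕ), Good n P ∧
      ∑ i ∈ Finset.range n, g i
        = (P.map (fun p => Q ((R.drop p.1).take (p.2 + 1 - p.1)))).sum := by
  intro n
  induction n using Nat.strong_induction_on with
  | _ n ih =>
    match n with
    | 0 => exact ⟨[], trivial, by simp⟩
    | n + 1 =>
      set s := (Finset.range (n + 1)).sup' Finset.nonempty_range_add_one
        (fun a => Q ((R.drop a).take (n + 1 - a)) - ∑ i ∈ Finset.Ico a n, g i) with hs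
      by_cases hpos : 0 < g n
      · have hgs : g n = s := by
          rcases le_total s 0 with h | h
          · rw [hg n, ← hs, max_eq_right h] at hpos; linarith
          · rw [hg n, ← hs, max_eq_left h]
        obtain ⟨a, ha, hae⟩ := Finset.exists_mem_eq_sup' (Finset.nonempty_range_add_one)
          (fun a => Q ((R.drop a).take (n + 1 - a)) - ∑ i ∈ Finset.Ico a n, g i)
        have han : a ≤ n := Nat.lt_succ_iff.mp (Finset.mem_range.mp ha)
        obtain ⟨P, hP, hsum⟩ := ih a (by omega)
        refine ⟨(a, n) :: P, ⟨han, Nat.lt_succ_self n, hP⟩, ?_⟩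
        have hfa : g n = Q ((R.drop a).take (n + 1 - a)) - ∑ i ∈ Finset.Ico a n, g i := by
          rw [hgs, hs]; exact hae
        have hsplit : ∑ i ∈ Finset.range (n + 1), g i
            = ∑ i ∈ Finset.range a, g i + ∑ i ∈ Finset.Ico a n, g i + g n := by
          rw [Finset.sum_range_succ]
          congr 1
          rw [Finset.range_eq_Ico, Finset.range_eq_Ico]
          exact (Finset.sum_Ico_consecutive _ (Nat.zero_le a) han).symm
        rw [hsplit, hfa, List.map_cons, List.sum_cons, hsum]
        ring
      · have hg0 : g n = 0 := le_antisymm (le_of_not_gt hpos)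
          (le_of_le_of_eq (le_max_right _ 0) (hg n).symm)
        obtain ⟨P, hP, hsum⟩ := ih n (Nat.lt_succ_self n)
        exact ⟨P, hP.mono (Nat.le_succ n), by rw [Finset.sum_range_succ, hg0, add_zero, hsum]⟩

end Stmt7Aux

/-- Correctness of the greedy disaggregation (Algorithm GetDisaggregation): if `Q` is a
nonnegative route-cost function that is weakly superadditive on the route `R`, and `g`
satisfies the greedy recurrence `g b = max Δ_b 0` with
`Δ_b = max_{a ≤ b} (Q((v_a,…,v_b)) - ∑_{i=a}^{b-1} g i)`, and `Q̂` is `g` with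
`max (Q R - ∑ᵢ g i) 0` added at the first position, then `Q̂` is nonnegative, sums to `Q R`,
and dominates `Q` on every contiguous subroute. -/
theorem stmt7 {V : Type*} (Q : List V → ℚ) (hQ0 : ∀ L, 0 ≤ Q L)
    (R : List V) (hnd : R.Nodup)
    (hws : ∀ (t : ℕ) (Rs : Fin t → List V),
      (∀ i, Rs i <:+: R) → (∀ i j, i ≠ j → (Rs i).Disjoint (Rs j)) →
      ∑ i, Q (Rs i) ≤ Q R)
    (g : ℕ → ℚ)
    (hg : ∀ b, g b = max ((Finset.range (b + 1)).sup' Finset.nonempty_range_add_one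
        (fun a => Q ((R.drop a).take (b + 1 - a)) - ∑ i ∈ Finset.Ico a b, g i)) 0)
    (Qhat : ℕ → ℚ)
    (hQhat : ∀ i, Qhat i =
      if i = 0 then g 0 + max (Q R - ∑ j ∈ Finset.range R.length, g j) 0 else g i) :
    (∀ i, 0 ≤ Qhat i) ∧
    (∑ i ∈ Finset.range R.length, Qhat i = Q R) ∧
    (∀ a b : ℕ, a ≤ b → b < R.length →
      Q ((R.drop a).take (b + 1 - a)) ≤ ∑ i ∈ Finset.Icc a b, Qhat i) := by
  have hgnn : ∀ b, 0 ≤ g b := fun b => le_of_le_of_eq (le_max_right _ 0) (hg b).symm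
  -- key inequality: ∑ g ≤ Q R
  have hkey : ∑ i ∈ Finset.range R.length, g i ≤ Q R := by
    obtain ⟨P, hP, hsum⟩ := Stmt7Aux.key Q R g hg R.length
    rw [hsum, Stmt7Aux.listsum]
    have hpw := hP.pairwise
    rw [List.pairwise_iff_getElem] at hpw
    apply hws P.length (fun i => (R.drop (P[i]).1).take ((P[i]).2 + 1 - (P[i]).1))
    · intro i
      exact ((List.take_prefix _ _).isInfix).trans (List.drop_suffix _ _).isInfix
    · intro i j hij
      rcases lt_or_gt_of_ne (fun h => hij (by ext; exact congrArg Fin.val h)) with h | h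
      · exact Stmt7Aux.disj_sub R hnd _ _ _ _ (hpw i j i.isLt j.isLt h)
          (hP.mem _ (List.getElem_mem _)).1
      · exact List.Disjoint.symm (Stmt7Aux.disj_sub R hnd _ _ _ _
          (hpw j i j.isLt i.isLt h) (hP.mem _ (List.getElem_mem _)).1)
  refine ⟨?_, ?_, ?_⟩
  · intro i
    rw [hQhat i]
    split
    · exact add_nonneg (hgnn 0) (le_max_right _ 0)
    · exact hgnn i
  · rcases Nat.eq_zero_or_pos R.length with hl | hl
    · rw [hl]
      have hR : R = [] := List.length_eq_zero_iff.mp hl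
      subst hR
      have h2 := hws 2 (fun _ => []) (fun _ => List.nil_infix)
        (fun i j _ => fun x hx _ => absurd hx List.not_mem_nil)
      rw [Fin.sum_univ_two] at h2
      have h0 := hQ0 ([] : List V)
      simp only [Finset.range_zero, Finset.sum_empty]
      linarith
    · have hcongr : ∀ i ∈ Finset.range R.length, Qhat i
          = g i + (if i = 0 then max (Q R - ∑ j ∈ Finset.range R.length, g j) 0 else 0) := by
        intro i _
        rw [hQhat i]
        split
        · next h => subst h; ring
        · ring
      rw [Finset.sum_congr rfl hcongr, Finset.sum_add_distrib,
        Finset.sum_ite_eq' (Finset.range R.length) 0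
          (fun _ => max (Q R - ∑ j ∈ Finset.range R.length, g j) 0),
        if_pos (Finset.mem_range.mpr hl), max_eq_left (sub_nonneg.mpr hkey)]
      ring
  · intro a b hab _
    have h1 : Q ((R.drop a).take (b + 1 - a)) - ∑ i ∈ Finset.Ico a b, g i ≤ g b := by
      rw [hg b]
      exact le_trans (Finset.le_sup'
        (fun a => Q ((R.drop a).take (b + 1 - a)) - ∑ i ∈ Finset.Ico a b, g i)
        (Finset.mem_range.mpr (Nat.lt_succ_of_le hab))) (le_max_left _ 0)
    have h2 : Q ((R.drop a).take (b + 1 - a)) ≤ ∑ i ∈ Finset.Icc a b, g i := by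
      rw [← Finset.Ico_add_one_right_eq_Icc, Finset.sum_Ico_succ_top (by omega)]
      linarith
    refine le_trans h2 (Finset.sum_le_sum fun i _ => ?_)
    rw [hQhat i]
    split
    · next h => subst h; exact le_add_of_nonneg_right (le_max_right _ 0)
    · exact le_refl _
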